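/- The kernel of the homomorphism $\pi':FB_n\to\mathfrak{S}_n$ sending $\sigma_i$ to the transposition $(i,i+1)$ and each $\tau_i$ to the identity is isomorphic to the direct product $\mathbb{Z}^n\times P_n$, where $P_n$ is the pure braid group (the kernel of the standard projection $B_n\to\mathfrak{S}_n$). -/

import Mathlib

/-! Framed braid group `FB_n` and braid group `B_n` as presented groups, and the
pure framed braid group as the kernel of the projection to the symmetric group. -/

/-- The braid relations on generators `σ_1, …, σ_{n-1}`. -/
def braidRels (n : ℕ) : Set (FreeGroup (Fin (n - 1))) :=
  {w | (∃ i j : Fin (n - 1), (i : ℕ) + 1 = (j : ℕ) ∧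
          w = .of i * .of j * .of i * (.of j * .of i * .of j)⁻¹) ∨
       (∃ i j : Fin (n - 1), (i : ℕ) + 2 ≤ (j : ℕ) ∧
          w = .of i * .of j * (.of j * .of i)⁻¹)}

/-- The braid group `B_n`. -/
abbrev BraidGroup (n : ℕ) := PresentedGroup (braidRels n)

/-- The generator `σ_i` of the braid group. -/
def bσ {n : ℕ} (i : Fin (n - 1)) : BraidGroup n := PresentedGroup.of i

/-- `i` as an element of `Fin n` (the index `i`). -/
def lo {n : ℕ} (i : Fin (n - 1)) : Fin n := ⟨i.1, by have := i.2; omega⟩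

/-- `i+1` as an element of `Fin n` (the index `i+1`). -/
def hi {n : ℕ} (i : Fin (n - 1)) : Fin n := ⟨i.1 + 1, by have := i.2; omega⟩

/-- The defining relations of the framed braid group, on generators
`σ_i = .inl i` and `τ_j = .inr j`. -/
def framedRels (n : ℕ) : Set (FreeGroup (Fin (n - 1) ⊕ Fin n)) :=
  {w | (∃ i j : Fin (n - 1), (i : ℕ) + 1 = (j : ℕ) ∧
          w = .of (.inl i) * .of (.inl j) * .of (.inl i) *
              (.of (.inl j) * .of (.inl i) * .of (.inl j))⁻¹) ∨
       (∃ i j : Fin (n - 1), (i : ℕ) + 2 ≤ (j : ℕ) ∧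
          w = .of (.inl i) * .of (.inl j) * (.of (.inl j) * .of (.inl i))⁻¹) ∨
       (∃ i j : Fin n,
          w = .of (.inr i) * .of (.inr j) * (.of (.inr j) * .of (.inr i))⁻¹) ∨
       (∃ i : Fin (n - 1),
          w = .of (.inl i) * .of (.inr (lo i)) * (.of (.inr (hi i)) * .of (.inl i))⁻¹) ∨
       (∃ i : Fin (n - 1),
          w = .of (.inl i) * .of (.inr (hi i)) * (.of (.inr (lo i)) * .of (.inl i))⁻¹) ∨
       (∃ (i : Fin (n - 1)) (j : Fin n), j ≠ lo i ∧ j ≠ hi i ∧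
          w = .of (.inl i) * .of (.inr j) * (.of (.inr j) * .of (.inl i))⁻¹)}

/-- The framed braid group `FB_n`. -/
abbrev FramedBraidGroup (n : ℕ) := PresentedGroup (framedRels n)

/-- The generator `σ_i` of the framed braid group. -/
def fσ {n : ℕ} (i : Fin (n - 1)) : FramedBraidGroup n := PresentedGroup.of (.inl i)

/-- The generator `τ_j` of the framed braid group. -/
def fτ {n : ℕ} (j : Fin n) : FramedBraidGroup n := PresentedGroup.of (.inr j)

section Aux

open SemidirectProduct

abbrev Zn (n : ℕ) := Fin n → Multiplicative ℤ

/-- Permutation action on `ℤ^n`. -/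
def permAut (n : ℕ) : Equiv.Perm (Fin n) →* MulAut (Zn n) where
  toFun p :=
    { toFun := fun v => v ∘ p.symm
      invFun := fun v => v ∘ p
      left_inv := fun v => by funext k; simp
      right_inv := fun v => by funext k; simp
      map_mul' := fun v w => rfl }
  map_one' := by ext v k; rfl
  map_mul' p q := by ext v k; simp [Equiv.Perm.mul_def]

lemma permAut_mulSingle {n : ℕ} (p : Equiv.Perm (Fin n)) (j : Fin n) (x : Multiplicative ℤ) :
    permAut n p (Pi.mulSingle j x) = Pi.mulSingle (p j) x := by
  funext k
  rcases eq_or_ne k (p j) with h | h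
  · subst h
    simp only [permAut, MonoidHom.coe_mk, OneHom.coe_mk, MulEquiv.coe_mk, Equiv.coe_fn_mk,
      Function.comp_apply]
    rw [Equiv.symm_apply_apply, Pi.mulSingle_eq_same, Pi.mulSingle_eq_same]
  · have h' : p.symm k ≠ j := fun hc => h (by rw [← hc, Equiv.apply_symm_apply])
    simp only [permAut, MonoidHom.coe_mk, OneHom.coe_mk, MulEquiv.coe_mk, Equiv.coe_fn_mk,
      Function.comp_apply]
    rw [Pi.mulSingle_eq_of_ne h', Pi.mulSingle_eq_of_ne h]

lemma mk_rel {α : Type*} {rels : Set (FreeGroup α)} {r : FreeGroup α} (h : r ∈ rels) :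
    PresentedGroup.mk rels r = 1 :=
  (QuotientGroup.eq_one_iff r).2 (Subgroup.subset_normalClosure h)

variable {n : ℕ}

lemma lo_ne_hi (i : Fin (n - 1)) : lo i ≠ hi i := by
  simp [lo, hi, Fin.ext_iff]

lemma fτ_comm (i j : Fin n) : fτ i * fτ j = fτ j * fτ i := by
  have h := mk_rel (show _ ∈ framedRels n from Or.inr (Or.inr (Or.inl ⟨i, j, rfl⟩)))
  simp only [map_mul, map_inv] at h
  rw [mul_inv_eq_one] at h
  exact h

lemma fσ_fτ_lo (i : Fin (n - 1)) : fσ i * fτ (lo i) = fτ (hi i) * fσ i := by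
  have h := mk_rel (show _ ∈ framedRels n from Or.inr (Or.inr (Or.inr (Or.inl ⟨i, rfl⟩))))
  simp only [map_mul, map_inv] at h
  rw [mul_inv_eq_one] at h
  exact h

lemma fσ_fτ_hi (i : Fin (n - 1)) : fσ i * fτ (hi i) = fτ (lo i) * fσ i := by
  have h := mk_rel (show _ ∈ framedRels n from
    Or.inr (Or.inr (Or.inr (Or.inr (Or.inl ⟨i, rfl⟩)))))
  simp only [map_mul, map_inv] at h
  rw [mul_inv_eq_one] at h
  exact h

lemma fσ_fτ_other (i : Fin (n - 1)) (j : Fin n) (h1 : j ≠ lo i) (h2 : j ≠ hi i) :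
    fσ i * fτ j = fτ j * fσ i := by
  have h := mk_rel (show _ ∈ framedRels n from
    Or.inr (Or.inr (Or.inr (Or.inr (Or.inr ⟨i, j, h1, h2, rfl⟩)))))
  simp only [map_mul, map_inv] at h
  rw [mul_inv_eq_one] at h
  exact h

lemma fσ_conj_fτ (i : Fin (n - 1)) (j : Fin n) :
    fσ i * fτ j * (fσ i)⁻¹ = fτ (Equiv.swap (lo i) (hi i) j) := by
  rcases eq_or_ne j (lo i) with rfl | h1
  · rw [Equiv.swap_apply_left, fσ_fτ_lo, mul_inv_cancel_right]
  rcases eq_or_ne j (hi i) with rfl | h2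
  · rw [Equiv.swap_apply_right, fσ_fτ_hi, mul_inv_cancel_right]
  · rw [Equiv.swap_apply_of_ne_of_ne h1 h2, fσ_fτ_other i j h1 h2, mul_inv_cancel_right]

end Aux

section Maps

open SemidirectProduct

lemma inr_mul_inl {N G : Type*} [Group N] [Group G] {φ : G →* MulAut N} (g : G) (v : N) :
    (inr g : N ⋊[φ] G) * inl v = inl (φ g v) * inr g := by
  rw [inl_aut, mul_assoc, ← map_mul, inv_mul_cancel, map_one, mul_one]

variable {n : ℕ} (π : BraidGroup n →* Equiv.Perm (Fin n))

/-- The action of the braid group on `ℤ^n` through `π`. -/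
def fbAct : BraidGroup n →* MulAut (Zn n) := (permAut n).comp π

def thetaFun : Fin (n - 1) ⊕ Fin n → Zn n ⋊[fbAct π] BraidGroup n
  | .inl i => inr (bσ i)
  | .inr j => inl (Pi.mulSingle j (Multiplicative.ofAdd 1))

lemma fbAct_bσ_single (hπ : ∀ i, π (bσ i) = Equiv.swap (lo i) (hi i)) (i : Fin (n - 1))
    (j : Fin n) (x : Multiplicative ℤ) :
    fbAct π (bσ i) (Pi.mulSingle j x) = Pi.mulSingle (Equiv.swap (lo i) (hi i) j) x := by
  show permAut n (π (bσ i)) _ = _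
  rw [hπ, permAut_mulSingle]

/-- The homomorphism `FB_n → ℤ^n ⋊ B_n`. -/
def Theta (hπ : ∀ i, π (bσ i) = Equiv.swap (lo i) (hi i)) :
    FramedBraidGroup n →* Zn n ⋊[fbAct π] BraidGroup n :=
  PresentedGroup.toGroup (f := thetaFun π) (by
    intro r hr
    rcases hr with ⟨i, j, hij, rfl⟩ | ⟨i, j, hij, rfl⟩ | ⟨i, j, rfl⟩ | ⟨i, rfl⟩ | ⟨i, rfl⟩ |
      ⟨i, j, h1, h2, rfl⟩ <;>
      simp only [map_mul, map_inv, FreeGroup.lift_apply_of, thetaFun] <;> rw [mul_inv_eq_one]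
    · rw [← map_mul, ← map_mul, ← map_mul, ← map_mul]
      congr 1
      have h := mk_rel (show _ ∈ braidRels n from Or.inl ⟨i, j, hij, rfl⟩)
      simp only [map_mul, map_inv] at h
      rw [mul_inv_eq_one] at h
      exact h
    · rw [← map_mul, ← map_mul]
      congr 1
      have h := mk_rel (show _ ∈ braidRels n from Or.inr ⟨i, j, hij, rfl⟩)
      simp only [map_mul, map_inv] at h
      rw [mul_inv_eq_one] at h
      exact h
    · rw [← map_mul, ← map_mul, mul_comm]
    · rw [inr_mul_inl, fbAct_bσ_single π hπ, Equiv.swap_apply_left]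
    · rw [inr_mul_inl, fbAct_bσ_single π hπ, Equiv.swap_apply_right]
    · rw [inr_mul_inl, fbAct_bσ_single π hπ, Equiv.swap_apply_of_ne_of_ne h1 h2])

lemma Theta_fσ (hπ : ∀ i, π (bσ i) = Equiv.swap (lo i) (hi i)) (i : Fin (n - 1)) :
    Theta π hπ (fσ i) = inr (bσ i) :=
  PresentedGroup.toGroup.of _

lemma Theta_fτ (hπ : ∀ i, π (bσ i) = Equiv.swap (lo i) (hi i)) (j : Fin n) :
    Theta π hπ (fτ j) = inl (Pi.mulSingle j (Multiplicative.ofAdd 1)) :=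
  PresentedGroup.toGroup.of _

/-- The homomorphism `ℤ^n → FB_n`. -/
def f1 : Zn n →* FramedBraidGroup n :=
  MonoidHom.noncommPiCoprod (fun j => zpowersHom _ (fτ j))
    (fun i j _ x y => by
      simp only [zpowersHom_apply]
      exact Commute.zpow_zpow (fτ_comm i j) _ _)

lemma f1_single (j : Fin n) (x : Multiplicative ℤ) :
    f1 (Pi.mulSingle j x) = fτ j ^ x.toAdd := by
  rw [f1]
  exact (MonoidHom.noncommPiCoprod_mulSingle ..).trans (zpowersHom_apply _ _ _)

lemma fσ_braid1 (i j : Fin (n - 1)) (h : (i : ℕ) + 1 = (j : ℕ)) :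
    fσ i * fσ j * fσ i = fσ j * fσ i * fσ j := by
  have hh := mk_rel (show _ ∈ framedRels n from Or.inl ⟨i, j, h, rfl⟩)
  simp only [map_mul, map_inv] at hh
  rw [mul_inv_eq_one] at hh
  exact hh

lemma fσ_braid2 (i j : Fin (n - 1)) (h : (i : ℕ) + 2 ≤ (j : ℕ)) :
    fσ i * fσ j = fσ j * fσ i := by
  have hh := mk_rel (show _ ∈ framedRels n from Or.inr (Or.inl ⟨i, j, h, rfl⟩))
  simp only [map_mul, map_inv] at hh
  rw [mul_inv_eq_one] at hh
  exact hh

/-- The homomorphism `B_n → FB_n`. -/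
def f2 : BraidGroup n →* FramedBraidGroup n :=
  PresentedGroup.toGroup (f := fσ) (by
    intro r hr
    rcases hr with ⟨i, j, hij, rfl⟩ | ⟨i, j, hij, rfl⟩ <;>
      simp only [map_mul, map_inv, FreeGroup.lift_apply_of] <;> rw [mul_inv_eq_one]
    · exact fσ_braid1 i j hij
    · exact fσ_braid2 i j hij)

lemma f2_bσ (i : Fin (n - 1)) : f2 (bσ i) = fσ i :=
  PresentedGroup.toGroup.of _

lemma xi_compat (hπ : ∀ i, π (bσ i) = Equiv.swap (lo i) (hi i)) (g : BraidGroup n) (v : Zn n) :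
    f1 (fbAct π g v) = f2 g * f1 v * (f2 g)⁻¹ := by
  have hgen : ∀ i : Fin (n - 1), ∀ w : Zn n,
      f1 (fbAct π (bσ i) w) = f2 (bσ i) * f1 w * (f2 (bσ i))⁻¹ := by
    intro i
    have hhom : f1.comp ((fbAct π) (bσ i)).toMonoidHom
        = (MulAut.conj (f2 (bσ i))).toMonoidHom.comp (f1 (n := n)) := by
      apply MonoidHom.pi_ext
      intro j x
      simp only [MonoidHom.comp_apply, MulEquiv.coe_toMonoidHom, MulAut.conj_apply]
      rw [fbAct_bσ_single π hπ, f1_single, f1_single, f2_bσ, ← fσ_conj_fτ, conj_zpow]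
    intro w
    have := DFunLike.congr_fun hhom w
    simpa using this
  have hg : g ∈ Subgroup.closure (Set.range (PresentedGroup.of (rels := braidRels n))) := by
    rw [PresentedGroup.closure_range_of]
    trivial
  revert v
  refine Subgroup.closure_induction (p := fun g _ => ∀ v : Zn n,
      f1 (fbAct π g v) = f2 g * f1 v * (f2 g)⁻¹) ?_ ?_ ?_ ?_ hg
  · rintro x ⟨i, rfl⟩ v
    exact hgen i v
  · intro v
    simp
  · intro x y _ _ hx hy v
    rw [map_mul]
    show f1 (fbAct π x (fbAct π y v)) = _
    rw [hx, hy, map_mul]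
    group
  · intro x _ hx v
    have := hx (fbAct π x⁻¹ v)
    rw [map_inv] at this ⊢
    rw [show (fbAct π x) ((fbAct π x)⁻¹ v) = v from by simp] at this
    rw [map_inv]
    rw [this]
    group

end Maps

section Equiv

open SemidirectProduct

variable {n : ℕ} (π : BraidGroup n →* Equiv.Perm (Fin n))
  (hπ : ∀ i, π (bσ i) = Equiv.swap (lo i) (hi i))

/-- The homomorphism `ℤ^n ⋊ B_n → FB_n`. -/
def Xi : Zn n ⋊[fbAct π] BraidGroup n →* FramedBraidGroup n :=
  SemidirectProduct.lift f1 f2 (fun g => MonoidHom.ext fun v => by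
    simpa using xi_compat π hπ g v)

lemma Xi_Theta : (Xi π hπ).comp (Theta π hπ) = MonoidHom.id _ := by
  apply PresentedGroup.ext
  rintro (i | j)
  · show Xi π hπ (Theta π hπ (fσ i)) = fσ i
    rw [Theta_fσ, Xi, lift_inr, f2_bσ]
  · show Xi π hπ (Theta π hπ (fτ j)) = fτ j
    rw [Theta_fτ, Xi, lift_inl, f1_single]
    simp

lemma Theta_Xi : (Theta π hπ).comp (Xi π hπ) = MonoidHom.id _ := by
  apply SemidirectProduct.hom_ext
  · apply MonoidHom.pi_ext
    intro j x
    show Theta π hπ (Xi π hπ (inl (Pi.mulSingle j x))) = inl (Pi.mulSingle j x)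
    rw [Xi, lift_inl, f1_single, map_zpow, Theta_fτ]
    rw [← map_zpow, ← Pi.mulSingle_zpow]
    congr 2
    rw [← ofAdd_zsmul, smul_eq_mul, mul_one, ofAdd_toAdd]
  · apply PresentedGroup.ext
    intro i
    show Theta π hπ (Xi π hπ (inr (bσ i))) = inr (bσ i)
    rw [Xi, lift_inr, f2_bσ, Theta_fσ]

/-- The isomorphism `FB_n ≃* ℤ^n ⋊ B_n`. -/
def FBEquiv : FramedBraidGroup n ≃* Zn n ⋊[fbAct π] BraidGroup n :=
  MonoidHom.toMulEquiv (Theta π hπ) (Xi π hπ) (Xi_Theta π hπ) (Theta_Xi π hπ)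

/-- Kernel of the projection of the semidirect product is `ℤ^n × ker π`. -/
def kerEquiv : ((π.comp (rightHom : Zn n ⋊[fbAct π] BraidGroup n →* BraidGroup n)).ker)
    ≃* Zn n × π.ker where
  toFun p := (p.1.left, ⟨p.1.right, by
    have h : π (rightHom p.1) = 1 := MonoidHom.mem_ker.mp p.2
    rwa [rightHom_eq_right] at h⟩)
  invFun q := ⟨⟨q.1, q.2.1⟩, by
    show π (rightHom (⟨q.1, q.2.1⟩ : Zn n ⋊[fbAct π] BraidGroup n)) = 1
    rw [rightHom_eq_right]
    exact q.2.2⟩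
  left_inv p := rfl
  right_inv q := rfl
  map_mul' p q := by
    refine Prod.ext ?_ (Subtype.ext ?_)
    · show (p.1 * q.1).left = p.1.left * q.1.left
      rw [mul_left]
      congr 1
      show permAut n (π p.1.right) q.1.left = q.1.left
      have h : π (rightHom p.1) = 1 := MonoidHom.mem_ker.mp p.2
      rw [rightHom_eq_right] at h
      rw [h, map_one]
      rfl
    · show (p.1 * q.1).right = p.1.right * q.1.right
      rw [mul_right]

end Equiv


/-- the kernel of `π' : FB_n → S_n` (sending `σ_i` to the transposition
`(i, i+1)` and each `τ_j` to the identity) is isomorphic to `ℤ^n × P_n`, where `P_n` is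
the pure braid group, i.e. the kernel of the standard projection `B_n → S_n`. -/
theorem stmt_4 (n : ℕ)
    (π' : FramedBraidGroup n →* Equiv.Perm (Fin n))
    (hσ : ∀ i : Fin (n - 1), π' (fσ i) = Equiv.swap (lo i) (hi i))
    (hτ : ∀ j : Fin n, π' (fτ j) = 1)
    (π : BraidGroup n →* Equiv.Perm (Fin n))
    (hπ : ∀ i : Fin (n - 1), π (bσ i) = Equiv.swap (lo i) (hi i)) :
    Nonempty (π'.ker ≃* (Fin n → Multiplicative ℤ) × π.ker) := by
  classical
  let E := FBEquiv π hπ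
  have hker : π' = (π.comp (SemidirectProduct.rightHom)).comp (E : FramedBraidGroup n →*
      Zn n ⋊[fbAct π] BraidGroup n) := by
    apply PresentedGroup.ext
    rintro (i | j)
    · show π' (fσ i) = π (SemidirectProduct.rightHom (Theta π hπ (fσ i)))
      rw [hσ, Theta_fσ, SemidirectProduct.rightHom_inr, hπ]
    · show π' (fτ j) = π (SemidirectProduct.rightHom (Theta π hπ (fτ j)))
      rw [hτ, Theta_fτ, SemidirectProduct.rightHom_inl, map_one]
  have hker2 : π'.ker = ((π.comp SemidirectProduct.rightHom).ker).comap
      (E : FramedBraidGroup n →* Zn n ⋊[fbAct π] BraidGroup n) := by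
    rw [MonoidHom.comap_ker, ← hker]
  have hmap : π'.ker.map (E : FramedBraidGroup n →* Zn n ⋊[fbAct π] BraidGroup n)
      = (π.comp SemidirectProduct.rightHom).ker := by
    rw [hker2]
    exact Subgroup.map_comap_eq_self_of_surjective E.surjective _
  exact ⟨((E.subgroupMap π'.ker).trans (MulEquiv.subgroupCongr hmap)).trans (kerEquiv π)⟩
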